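/- For fixed t > 0 and σ > 0, the map λ ↦ p(λ; t, σ) is continuous and strictly decreasing on (0, ∞), with p(λ; t, σ) → +∞ as λ → 0⁺ and p(λ; t, σ) → σ(e^{2t} − 1) as λ → +∞. Consequently, given a finite nonempty set S of links with flows t_l > 0 and noise powers σ_l > 0, and an energy budget E with E > ∑_{l∈S} σ_l(e^{2 t_l} − 1), there exists a unique λ* > 0 such that ∑_{l∈S} p(λ*; t_l, σ_l) = E. -/

import Mathlib

open BigOperators

/-- `p` solves the stationarity equation
`(t/(2σ)) · ((1/2)·ln(1 + p/σ) − t)^{−2} · (1 + p/σ)^{−1} = λ` on the domain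
`p > σ(e^{2t} − 1)`; this characterizes the unique solution `p(λ; t, σ)`. -/
def IsStatSol (t σ lam p : ℝ) : Prop :=
  σ * (Real.exp (2 * t) - 1) < p ∧
    t / (2 * σ) / ((1 / 2) * Real.log (1 + p / σ) - t) ^ 2 / (1 + p / σ) = lam

open BigOperators

noncomputable def Fst (t σ p : ℝ) : ℝ :=
  t / (2 * σ) / ((1 / 2) * Real.log (1 + p / σ) - t) ^ 2 / (1 + p / σ)

lemma x_gt {t σ p : ℝ} (hσ : 0 < σ) (hp : σ * (Real.exp (2 * t) - 1) < p) :
    Real.exp (2 * t) < 1 + p / σ := by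
  have h : Real.exp (2 * t) - 1 < p / σ := by
    rw [lt_div_iff₀ hσ]; linarith [hp]
  linarith

lemma u_pos {t σ p : ℝ} (hσ : 0 < σ) (hp : σ * (Real.exp (2 * t) - 1) < p) :
    0 < (1 / 2) * Real.log (1 + p / σ) - t := by
  have hx := x_gt hσ hp
  have : (2 : ℝ) * t < Real.log (1 + p / σ) := by
    have := Real.log_lt_log (Real.exp_pos _) hx
    rwa [Real.log_exp] at this
  linarith

lemma Fst_eq {t σ p : ℝ} :
    Fst t σ p = t / (2 * σ) / (((1 / 2) * Real.log (1 + p / σ) - t) ^ 2 * (1 + p / σ)) := by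
  rw [Fst, div_div]

lemma Fst_pos {t σ p : ℝ} (ht : 0 < t) (hσ : 0 < σ)
    (hp : σ * (Real.exp (2 * t) - 1) < p) : 0 < Fst t σ p := by
  have hu := u_pos hσ hp
  have hx : (0:ℝ) < 1 + p / σ := lt_trans (Real.exp_pos _) (x_gt hσ hp)
  rw [Fst_eq]
  positivity

lemma Fst_anti {t σ : ℝ} (ht : 0 < t) (hσ : 0 < σ) :
    StrictAntiOn (Fst t σ) (Set.Ioi (σ * (Real.exp (2 * t) - 1))) := by
  intro p hp q hq hpq
  have hup := u_pos hσ hp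
  have huq := u_pos hσ hq
  have hxp : (0:ℝ) < 1 + p / σ := lt_trans (Real.exp_pos _) (x_gt hσ hp)
  have hxq : (0:ℝ) < 1 + q / σ := lt_trans (Real.exp_pos _) (x_gt hσ hq)
  have hxlt : 1 + p / σ < 1 + q / σ := by
    gcongr
  have hult : (1 / 2) * Real.log (1 + p / σ) - t < (1 / 2) * Real.log (1 + q / σ) - t := by
    have := Real.log_lt_log hxp hxlt
    linarith
  have hD : ((1 / 2) * Real.log (1 + p / σ) - t) ^ 2 * (1 + p / σ)
      < ((1 / 2) * Real.log (1 + q / σ) - t) ^ 2 * (1 + q / σ) := by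
    gcongr ((?_)^2 * ?_)
  rw [Fst_eq, Fst_eq]
  exact div_lt_div_of_pos_left (by positivity) (by positivity) hD

lemma part1 (t σ : ℝ) (ht : 0 < t) (hσ : 0 < σ) (P : ℝ → ℝ)
    (hP : ∀ lam : ℝ, 0 < lam → IsStatSol t σ lam (P lam)) :
    ContinuousOn P (Set.Ioi 0) ∧
    StrictAntiOn P (Set.Ioi 0) ∧
    Filter.Tendsto P (nhdsWithin 0 (Set.Ioi 0)) Filter.atTop ∧
    Filter.Tendsto P Filter.atTop (nhds (σ * (Real.exp (2 * t) - 1))) := by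
  set a := σ * (Real.exp (2 * t) - 1) with ha
  have hPa : ∀ lam : ℝ, 0 < lam → a < P lam := fun lam h => (hP lam h).1
  have hFP : ∀ lam : ℝ, 0 < lam → Fst t σ (P lam) = lam := fun lam h => (hP lam h).2
  have hF := Fst_anti (t := t) (σ := σ) ht hσ
  -- strict antitonicity of P
  have hanti : StrictAntiOn P (Set.Ioi 0) := by
    intro l1 h1 l2 h2 h12
    rw [Set.mem_Ioi] at h1 h2
    by_contra hc
    push_neg at hc
    rcases eq_or_lt_of_le hc with heq | hlt
    · have := (hFP l1 h1).symm.trans ((by rw [heq] : Fst t σ (P l1) = Fst t σ (P l2)).trans (hFP l2 h2))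
      exact absurd this (ne_of_lt h12)
    · have := hF (hPa l1 h1) (hPa l2 h2) hlt
      rw [hFP l1 h1, hFP l2 h2] at this
      exact absurd this (not_lt.2 h12.le)
  -- key comparison lemma: P lam vs any point b in the domain
  have key : ∀ (b lam : ℝ), a < b → 0 < lam → (lam < Fst t σ b → b < P lam) ∧ (Fst t σ b < lam → P lam < b) := by
    intro b lam hb hlam
    constructor
    · intro h
      by_contra hc
      push_neg at hc
      rcases eq_or_lt_of_le hc with heq | hlt
      · rw [← heq, hFP lam hlam] at h; exact lt_irrefl _ h
      · have := hF (hPa lam hlam) hb hlt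
        rw [hFP lam hlam] at this
        exact absurd h (not_lt.2 this.le)
    · intro h
      by_contra hc
      push_neg at hc
      rcases eq_or_lt_of_le hc with heq | hlt
      · rw [heq, hFP lam hlam] at h; exact lt_irrefl _ h
      · have := hF hb (hPa lam hlam) hlt
        rw [hFP lam hlam] at this
        exact absurd h (not_lt.2 this.le)
  -- surjectivity of P onto Ioi a
  have himg : P '' Set.Ioi 0 = Set.Ioi a := by
    apply Set.Subset.antisymm
    · rintro _ ⟨lam, hlam, rfl⟩
      exact hPa lam hlam
    · intro p hp
      rw [Set.mem_Ioi] at hp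
      refine ⟨Fst t σ p, Fst_pos ht hσ hp, ?_⟩
      have h1 := hPa _ (Fst_pos ht hσ hp)
      have h2 := hFP _ (Fst_pos ht hσ hp)
      exact hF.injOn h1 hp h2
  -- continuity
  have hcont : ContinuousOn P (Set.Ioi 0) := by
    intro lam hlam
    rw [Set.mem_Ioi] at hlam
    have hg : StrictMonoOn (fun x => -P x) (Set.Ioi 0) := fun x hx y hy hxy => neg_lt_neg (hanti hx hy hxy)
    have himg' : (fun x => -P x) '' Set.Ioi 0 = Set.Iio (-a) := by
      have : (fun x => -P x) '' Set.Ioi 0 = Neg.neg '' (P '' Set.Ioi 0) := by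
        rw [← Set.image_comp]; rfl
      rw [this, himg]
      ext x
      simp only [Set.mem_image, Set.mem_Ioi, Set.mem_Iio]
      constructor
      · rintro ⟨y, hy, rfl⟩; linarith
      · intro hx; exact ⟨-x, by linarith, neg_neg x⟩
    have hca : ContinuousAt (fun x => -P x) lam := by
      apply hg.continuousAt_of_image_mem_nhds (Ioi_mem_nhds hlam)
      rw [himg']
      exact Iio_mem_nhds (by have := hPa lam hlam; simp; linarith)
    have : ContinuousAt P lam := by
      have := hca.neg
      simpa only [Pi.neg_def, neg_neg] using this
    exact this.continuousWithinAt
  refine ⟨hcont, hanti, ?_, ?_⟩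
  · -- tendsto atTop at 0+
    rw [Filter.tendsto_atTop]
    intro b
    set M := max b (a + 1) with hM
    have hMa : a < M := lt_of_lt_of_le (by linarith) (le_max_right _ _)
    have hδ : 0 < Fst t σ M := Fst_pos ht hσ hMa
    filter_upwards [Ioo_mem_nhdsGT_of_mem (Set.mem_Ico.2 ⟨le_refl 0, hδ⟩)] with lam hlam
    have := (key M lam hMa hlam.1).1 hlam.2
    exact le_trans (le_max_left _ _) this.le
  · -- tendsto to a at atTop
    rw [tendsto_order]
    constructor
    · intro b hb
      filter_upwards [Filter.eventually_gt_atTop 0] with lam hlam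
      exact lt_trans hb (hPa lam hlam)
    · intro b hb
      filter_upwards [Filter.eventually_gt_atTop (max (Fst t σ b) 0),
        Filter.eventually_gt_atTop 0] with lam h1 h2
      exact (key b lam hb h2).2 (lt_of_le_of_lt (le_max_left _ _) h1)

/-- For fixed `t > 0` and `σ > 0`, the map `λ ↦ p(λ; t, σ)` (given by any
selection `P` of solutions of the stationarity equation) is continuous and strictly
decreasing on `(0, ∞)`, with `p(λ) → +∞` as `λ → 0⁺` and `p(λ) → σ(e^{2t} − 1)` as
`λ → +∞`. Consequently, for a finite nonempty set `S` of links with flows `t_l > 0`,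
noise powers `σ_l > 0`, and an energy budget `E > ∑_l σ_l(e^{2 t_l} − 1)`, there
exists a unique `λ* > 0` with `∑_l p(λ*; t_l, σ_l) = E`. -/
theorem statSol_in_lambda_and_waterfilling :
    (∀ t σ : ℝ, 0 < t → 0 < σ → ∀ P : ℝ → ℝ,
      (∀ lam : ℝ, 0 < lam → IsStatSol t σ lam (P lam)) →
      ContinuousOn P (Set.Ioi 0) ∧
      StrictAntiOn P (Set.Ioi 0) ∧
      Filter.Tendsto P (nhdsWithin 0 (Set.Ioi 0)) Filter.atTop ∧
      Filter.Tendsto P Filter.atTop (nhds (σ * (Real.exp (2 * t) - 1)))) ∧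
    (∀ (S : Type) [Fintype S] [Nonempty S] (t σ : S → ℝ) (E : ℝ),
      (∀ l, 0 < t l) → (∀ l, 0 < σ l) →
      (∑ l, σ l * (Real.exp (2 * t l) - 1)) < E →
      ∀ P : S → ℝ → ℝ,
        (∀ l (lam : ℝ), 0 < lam → IsStatSol (t l) (σ l) lam (P l lam)) →
        ∃! lam : ℝ, 0 < lam ∧ (∑ l, P l lam) = E) := by
  refine ⟨part1, ?_⟩
  intro S _ _ t σ E ht hσ hE P hP
  classical
  have h1 := fun l => part1 (t l) (σ l) (ht l) (hσ l) (P l) (hP l)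
  set G : ℝ → ℝ := fun lam => ∑ l, P l lam with hG
  have hGa : ∀ lam, 0 < lam → (∑ l, σ l * (Real.exp (2 * t l) - 1)) < G lam := by
    intro lam hlam
    exact Finset.sum_lt_sum_of_nonempty Finset.univ_nonempty
      (fun l _ => (hP l lam hlam).1)
  have hGcont : ContinuousOn G (Set.Ioi 0) :=
    continuousOn_finset_sum _ (fun l _ => (h1 l).1)
  have hGanti : StrictAntiOn G (Set.Ioi 0) := by
    intro x hx y hy hxy
    exact Finset.sum_lt_sum_of_nonempty Finset.univ_nonempty
      (fun l _ => (h1 l).2.1 hx hy hxy)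
  -- find lam1 with G lam1 ≥ E
  obtain ⟨l₀⟩ := (inferInstance : Nonempty S)
  set C : ℝ := ∑ l ∈ Finset.univ.erase l₀, σ l * (Real.exp (2 * t l) - 1) with hC
  have hev : ∀ᶠ lam in nhdsWithin 0 (Set.Ioi 0), E - C ≤ P l₀ lam :=
    (h1 l₀).2.2.1.eventually (Filter.eventually_ge_atTop (E - C))
  obtain ⟨lam1, hlam1, hPl0⟩ := (hev.and self_mem_nhdsWithin).exists
  have hGlam1 : E ≤ G lam1 := by
    have hsum : G lam1 = P l₀ lam1 + ∑ l ∈ Finset.univ.erase l₀, P l lam1 :=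
      (Finset.add_sum_erase _ _ (Finset.mem_univ l₀)).symm
    have hrest : C ≤ ∑ l ∈ Finset.univ.erase l₀, P l lam1 :=
      Finset.sum_le_sum (fun l _ => (hP l lam1 hPl0).1.le)
    rw [hsum]; linarith [hlam1]
  -- find lam2 > lam1 with G lam2 < E
  have hGtend : Filter.Tendsto G Filter.atTop (nhds (∑ l, σ l * (Real.exp (2 * t l) - 1))) :=
    tendsto_finset_sum _ (fun l _ => (h1 l).2.2.2)
  have hev2 : ∀ᶠ lam in Filter.atTop, G lam < E := hGtend.eventually_lt_const hE
  obtain ⟨lam2, hlam2E, hlam2gt⟩ :=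
    ((hev2.and (Filter.eventually_gt_atTop (max lam1 0)))).exists
  have hlam2pos : 0 < lam2 := lt_of_le_of_lt (le_max_right _ _) hlam2gt
  have hlam12 : lam1 ≤ lam2 := le_of_lt (lt_of_le_of_lt (le_max_left _ _) hlam2gt)
  -- IVT
  have hsub : Set.Icc lam1 lam2 ⊆ Set.Ioi 0 := fun x hx => lt_of_lt_of_le hPl0 hx.1
  have hivt := intermediate_value_Icc' hlam12 (hGcont.mono hsub)
  have hEmem : E ∈ Set.Icc (G lam2) (G lam1) := ⟨hlam2E.le, hGlam1⟩
  obtain ⟨lam, hlammem, hlamE⟩ := hivt hEmem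
  have hlampos : 0 < lam := lt_of_lt_of_le hPl0 hlammem.1
  refine ⟨lam, ⟨hlampos, hlamE⟩, ?_⟩
  intro y ⟨hy, hyE⟩
  exact hGanti.injOn (Set.mem_Ioi.2 hy) (Set.mem_Ioi.2 hlampos) (hyE.trans hlamE.symm)
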